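/- Let 0 < q < 1, s ∈ ℝ, n ∈ ℕ and let p ≥ 1 be an integer. Then s·((D_q)^p H_{n,p})(x,s|q) - q^{p-n}·x·(D_q H_{n,p})(x,s|q) + q^{p-n}·{n}_q·H_{n,p}(x,s|q) = 0 as polynomials in x, where q^{p-n} denotes the real power of q and (D_q)^p is the p-fold iterated q-derivative. -/

import Mathlib

/-- The q-number `{n}_q = 1 + q + ⋯ + q^{n-1}`. -/
noncomputable def qNum (q : ℝ) (n : ℕ) : ℝ := ∑ k ∈ Finset.range n, q ^ k

/-- The q-factorial `{n}_q! = Π_{k=1}^n {k}_q`. -/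
noncomputable def qFact (q : ℝ) (n : ℕ) : ℝ := ∏ k ∈ Finset.range n, qNum q (k + 1)

/-- The even q-double factorial `{2k}_q!! = Π_{l=1}^k {2l}_q`. -/
noncomputable def qDoubleFact (q : ℝ) (k : ℕ) : ℝ := ∏ l ∈ Finset.range k, qNum q (2 * (l + 1))

/-- The q-Hermite polynomial `H_n(x,s|q) = Σ_{k=0}^{⌊n/2⌋} (-1)^k q^{k(k-1)}
({n}_q!/({n-2k}_q!·{2k}_q!!)) s^k x^{n-2k}`. -/
noncomputable def qHermite (q s : ℝ) (n : ℕ) : Polynomial ℝ :=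
  ∑ k ∈ Finset.range (n / 2 + 1),
    Polynomial.C ((-1 : ℝ) ^ k * q ^ (k * (k - 1)) *
        (qFact q n / (qFact q (n - 2 * k) * qDoubleFact q k)) * s ^ k) *
      Polynomial.X ^ (n - 2 * k)

/-- The q-derivative on polynomials: it sends `x^j` to `{j}_q x^{j-1}`. -/
noncomputable def qDeriv (q : ℝ) (f : Polynomial ℝ) : Polynomial ℝ :=
  f.sum fun j a => Polynomial.C (a * qNum q j) * Polynomial.X ^ (j - 1)

/-- The q-p-double factorial `{pk}_q!! = Π_{l=1}^k {pl}_q`. -/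
noncomputable def qPDoubleFact (q : ℝ) (p k : ℕ) : ℝ := ∏ l ∈ Finset.range k, qNum q (p * (l + 1))

/-- The doubly indexed Hermite polynomial
`H_{n,p}(x,s|q) = {n}_q!·Σ_{k=0}^{⌊n/p⌋} (-1)^k q^{p·k(k-1)/2} s^k x^{n-pk}/({pk}_q!!·{n-pk}_q!)`. -/
noncomputable def qHermiteDI (q s : ℝ) (n p : ℕ) : Polynomial ℝ :=
  Polynomial.C (qFact q n) *
    ∑ k ∈ Finset.range (n / p + 1),
      Polynomial.C ((-1 : ℝ) ^ k * q ^ (p * (k * (k - 1) / 2)) * s ^ k /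
          (qPDoubleFact q p k * qFact q (n - p * k))) *
        Polynomial.X ^ (n - p * k)

open Polynomial Finset

lemma qNum_zero (q : ℝ) : qNum q 0 = 0 := by simp [qNum]

lemma qNum_pos {q : ℝ} (hq : 0 < q) {m : ℕ} (hm : 1 ≤ m) : 0 < qNum q m := by
  have : (0:ℝ) < ∑ k ∈ Finset.range m, q ^ k :=
    Finset.sum_pos (fun k _ => pow_pos hq k) (by simp; omega)
  simpa [qNum] using this

lemma qFact_pos {q : ℝ} (hq : 0 < q) (m : ℕ) : 0 < qFact q m :=
  Finset.prod_pos fun k _ => qNum_pos hq (by omega)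

lemma qPDoubleFact_pos {q : ℝ} (hq : 0 < q) {p : ℕ} (hp : 1 ≤ p) (k : ℕ) :
    0 < qPDoubleFact q p k :=
  Finset.prod_pos fun l _ => qNum_pos hq (by nlinarith)

lemma qNum_add (q : ℝ) (m d : ℕ) : qNum q (m + d) = qNum q m + q ^ m * qNum q d := by
  simp [qNum, Finset.sum_range_add, Finset.mul_sum, pow_add]

lemma qDeriv_monomial (q a : ℝ) (m : ℕ) :
    qDeriv q (Polynomial.C a * Polynomial.X ^ m) =
      Polynomial.C (a * qNum q m) * Polynomial.X ^ (m - 1) := by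
  rw [Polynomial.C_mul_X_pow_eq_monomial, qDeriv, Polynomial.sum_monomial_index]
  simp

lemma qDeriv_add (q : ℝ) (f g : Polynomial ℝ) :
    qDeriv q (f + g) = qDeriv q f + qDeriv q g := by
  unfold qDeriv
  rw [Polynomial.sum_add_index] <;> intros <;> simp [add_mul]

lemma qDeriv_zero (q : ℝ) : qDeriv q 0 = 0 := by simp [qDeriv]

lemma qDeriv_sum (q : ℝ) {ι : Type*} (t : Finset ι) (f : ι → Polynomial ℝ) :
    qDeriv q (∑ i ∈ t, f i) = ∑ i ∈ t, qDeriv q (f i) := by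
  classical
  induction t using Finset.induction with
  | empty => simp [qDeriv_zero]
  | @insert a t h ih => simp [Finset.sum_insert h, qDeriv_add, ih]

lemma qDeriv_iterate_sum (q : ℝ) (p : ℕ) {ι : Type*} (t : Finset ι) (f : ι → Polynomial ℝ) :
    (qDeriv q)^[p] (∑ i ∈ t, f i) = ∑ i ∈ t, (qDeriv q)^[p] (f i) := by
  induction p generalizing f with
  | zero => simp
  | succ p ih => simp [Function.iterate_succ_apply, qDeriv_sum, ih]

lemma qDeriv_iterate_monomial (q a : ℝ) (p m : ℕ) :
    (qDeriv q)^[p] (Polynomial.C a * Polynomial.X ^ m) =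
      Polynomial.C (a * ∏ i ∈ Finset.range p, qNum q (m - i)) * Polynomial.X ^ (m - p) := by
  induction p generalizing a m with
  | zero => simp
  | succ p ih =>
      rw [Function.iterate_succ_apply, qDeriv_monomial, ih]
      congr 2
      · rw [Finset.prod_range_succ']
        have : ∀ i, m - 1 - i = m - (i + 1) := fun i => by omega
        simp only [this, Nat.sub_zero]
        ring
      · omega

lemma qFact_succ (q : ℝ) (m : ℕ) : qFact q (m + 1) = qFact q m * qNum q (m + 1) :=
  Finset.prod_range_succ _ _

lemma qFact_add_prod (q : ℝ) (M p : ℕ) :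
    qFact q (M + p) = qFact q M * ∏ i ∈ Finset.range p, qNum q (M + p - i) := by
  induction p with
  | zero => simp
  | succ p ih =>
      have h : ∀ i ∈ Finset.range p, qNum q (M + p + 1 - (i + 1)) = qNum q (M + p - i) :=
        fun i _ => by congr 1; omega
      rw [show M + (p + 1) = (M + p) + 1 from rfl, qFact_succ, ih, Finset.prod_range_succ',
        Finset.prod_congr rfl h]
      simp only [Nat.sub_zero]
      ring

lemma tri (k : ℕ) : (k + 1) * k / 2 = k * (k - 1) / 2 + k := by
  have h : k * (k - 1) + 2 * k = (k + 1) * k := by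
    cases k with
    | zero => simp
    | succ m => simp only [Nat.add_sub_cancel]; ring
  rw [← h, Nat.add_mul_div_left _ _ (by norm_num : 0 < 2)]

/-- The coefficient `A_k` of `x^{n-pk}` in `H_{n,p}`. -/
noncomputable def qhA (q s : ℝ) (n p k : ℕ) : ℝ :=
  qFact q n * ((-1:ℝ) ^ k * q ^ (p * (k * (k - 1) / 2)) * s ^ k /
    (qPDoubleFact q p k * qFact q (n - p * k)))

lemma key (q s : ℝ) (hq0 : 0 < q) (n p k : ℕ) (hp : 1 ≤ p) (h : p * (k + 1) ≤ n) :
    s * (qhA q s n p k * ∏ i ∈ Finset.range p, qNum q (n - p * k - i)) +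
      q ^ ((p : ℤ) - (n : ℤ)) * qhA q s n p (k + 1) * q ^ (n - p * (k + 1)) *
        qNum q (p * (k + 1)) = 0 := by
  unfold qhA
  have hq : q ≠ 0 := hq0.ne'
  have hmul : p * (k + 1) = p * k + p := by ring
  have hPpos : (0:ℝ) < ∏ i ∈ Finset.range p, qNum q (n - p * k - i) :=
    Finset.prod_pos fun i hi => qNum_pos hq0 (by simp at hi; omega)
  have hfact : qFact q (n - p * k) =
      qFact q (n - p * (k + 1)) * ∏ i ∈ Finset.range p, qNum q (n - p * k - i) := by
    have h1 : n - p * (k + 1) + p = n - p * k := by omega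
    rw [← h1]
    exact qFact_add_prod q _ p
  have hpd : qPDoubleFact q p (k + 1) = qPDoubleFact q p k * qNum q (p * (k + 1)) :=
    Finset.prod_range_succ _ _
  have hexp : p * ((k + 1) * ((k + 1) - 1) / 2) = p * (k * (k - 1) / 2) + p * k := by
    simp only [Nat.add_sub_cancel]
    rw [tri k, Nat.mul_add]
  have hZ : q ^ ((p : ℤ) - (n : ℤ)) * (q ^ (n - p * (k + 1)) * q ^ (p * k)) = 1 := by
    rw [← zpow_natCast q (n - p * (k + 1)), ← zpow_natCast q (p * k), ← zpow_add₀ hq,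
      ← zpow_add₀ hq]
    rw [show (p : ℤ) - (n : ℤ) + (((n - p * (k + 1) : ℕ) : ℤ) + ((p * k : ℕ) : ℤ)) = 0 by
      push_cast [Nat.cast_sub h]; ring]
    exact zpow_zero q
  have hqz : q ^ ((p : ℤ) - (n : ℤ)) = (q ^ (n - p * (k + 1)) * q ^ (p * k))⁻¹ :=
    eq_inv_of_mul_eq_one_left hZ
  rw [hfact, hpd, hexp, hqz, pow_add]
  have hD := (qPDoubleFact_pos hq0 hp k).ne'
  have hF1 := (qFact_pos hq0 (n - p * (k + 1))).ne'
  have hN1 := (qNum_pos hq0 (show 1 ≤ p * (k + 1) by nlinarith)).ne'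
  have hP := hPpos.ne'
  field_simp
  ring

lemma mid (q b : ℝ) (e : ℕ) :
    (Polynomial.X : Polynomial ℝ) * (Polynomial.C (b * qNum q e) * Polynomial.X ^ (e - 1)) =
      Polynomial.C (b * qNum q e) * Polynomial.X ^ e := by
  cases e with
  | zero => simp [qNum_zero]
  | succ m =>
      simp only [Nat.add_sub_cancel]
      ring

/-- `p`-th order q-difference equation:
`s·(D_q)^p H_{n,p}(x,s|q) - q^{p-n}·x·D_q H_{n,p}(x,s|q) + q^{p-n}·{n}_q·H_{n,p}(x,s|q) = 0`. -/
theorem qHermiteDI_difference_equation (q : ℝ) (hq0 : 0 < q) (hq1 : q < 1) (s : ℝ) (n p : ℕ)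
    (hp : 1 ≤ p) :
    Polynomial.C s * (qDeriv q)^[p] (qHermiteDI q s n p) -
        Polynomial.C (q ^ ((p : ℤ) - (n : ℤ))) * Polynomial.X * qDeriv q (qHermiteDI q s n p) +
        Polynomial.C (q ^ ((p : ℤ) - (n : ℤ)) * qNum q n) * qHermiteDI q s n p = 0 := by
  classical
  set qz : ℝ := q ^ ((p : ℤ) - (n : ℤ)) with hqzdef
  have hH : qHermiteDI q s n p =
      ∑ k ∈ Finset.range (n / p + 1), Polynomial.C (qhA q s n p k) * Polynomial.X ^ (n - p * k) := by
    rw [qHermiteDI, Finset.mul_sum]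
    exact Finset.sum_congr rfl fun k _ => by rw [qhA, Polynomial.C_mul]; ring
  have hD1 : qDeriv q (qHermiteDI q s n p) =
      ∑ k ∈ Finset.range (n / p + 1),
        Polynomial.C (qhA q s n p k * qNum q (n - p * k)) * Polynomial.X ^ (n - p * k - 1) := by
    rw [hH, qDeriv_sum]
    exact Finset.sum_congr rfl fun k _ => qDeriv_monomial q _ _
  have hDp : (qDeriv q)^[p] (qHermiteDI q s n p) =
      ∑ k ∈ Finset.range (n / p + 1),
        Polynomial.C (qhA q s n p k * ∏ i ∈ Finset.range p, qNum q (n - p * k - i)) *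
          Polynomial.X ^ (n - p * k - p) := by
    rw [hH, qDeriv_iterate_sum]
    exact Finset.sum_congr rfl fun k _ => qDeriv_iterate_monomial q _ _ _
  rw [hDp, hD1, hH, Finset.mul_sum, Finset.mul_sum, Finset.mul_sum,
    ← Finset.sum_sub_distrib, ← Finset.sum_add_distrib]
  have step : ∀ k ∈ Finset.range (n / p + 1),
      Polynomial.C s * (Polynomial.C (qhA q s n p k * ∏ i ∈ Finset.range p, qNum q (n - p * k - i)) *
          Polynomial.X ^ (n - p * k - p)) -
        Polynomial.C qz * Polynomial.X *
          (Polynomial.C (qhA q s n p k * qNum q (n - p * k)) * Polynomial.X ^ (n - p * k - 1)) +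
        Polynomial.C (qz * qNum q n) * (Polynomial.C (qhA q s n p k) * Polynomial.X ^ (n - p * k)) =
      Polynomial.C (s * (qhA q s n p k * ∏ i ∈ Finset.range p, qNum q (n - p * k - i))) *
          Polynomial.X ^ (n - p * k - p) +
        Polynomial.C (qz * qhA q s n p k * q ^ (n - p * k) * qNum q (p * k)) *
          Polynomial.X ^ (n - p * k) := by
    intro k hk
    have hkN : k ≤ n / p := by simp at hk; omega
    have hkn : p * k ≤ n := by
      calc p * k ≤ p * (n / p) := Nat.mul_le_mul_left p hkN
      _ = (n / p) * p := mul_comm _ _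
      _ ≤ n := Nat.div_mul_le_self n p
    have he : n - p * k + p * k = n := by omega
    have hqn : qNum q n = qNum q (n - p * k) + q ^ (n - p * k) * qNum q (p * k) := by
      conv_lhs => rw [← he]
      exact qNum_add q _ _
    have e1 : Polynomial.C qz * Polynomial.X *
        (Polynomial.C (qhA q s n p k * qNum q (n - p * k)) * Polynomial.X ^ (n - p * k - 1)) =
        Polynomial.C (qz * (qhA q s n p k * qNum q (n - p * k))) * Polynomial.X ^ (n - p * k) := by
      rw [mul_assoc, mid, ← mul_assoc, ← Polynomial.C_mul]
    rw [e1, ← mul_assoc (Polynomial.C s), ← Polynomial.C_mul,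
      ← mul_assoc (Polynomial.C (qz * qNum q n)), ← Polynomial.C_mul]
    have hsc : qz * qNum q n * qhA q s n p k - qz * (qhA q s n p k * qNum q (n - p * k)) =
        qz * qhA q s n p k * q ^ (n - p * k) * qNum q (p * k) := by
      rw [hqn]; ring
    rw [sub_add_eq_add_sub, add_sub_assoc, ← sub_mul, ← Polynomial.C_sub, hsc]
  rw [Finset.sum_congr rfl step, Finset.sum_add_distrib, Finset.sum_range_succ,
    Finset.sum_range_succ']
  have hT1last : Polynomial.C (s * (qhA q s n p (n / p) *
      ∏ i ∈ Finset.range p, qNum q (n - p * (n / p) - i))) *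
      Polynomial.X ^ (n - p * (n / p) - p) = 0 := by
    have h1 : p * (n / p) + n % p = n := Nat.div_add_mod n p
    have h2 : n % p < p := Nat.mod_lt _ (by omega)
    have hmod : n - p * (n / p) < p := by omega
    have hzero : (∏ i ∈ Finset.range p, qNum q (n - p * (n / p) - i)) = 0 :=
      Finset.prod_eq_zero (Finset.mem_range.mpr hmod) (by rw [Nat.sub_self, qNum_zero])
    rw [hzero]
    simp
  have hT230 : Polynomial.C (qz * qhA q s n p 0 * q ^ (n - p * 0) * qNum q (p * 0)) *
      Polynomial.X ^ (n - p * 0) = 0 := by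
    simp [qNum_zero]
  rw [hT1last, hT230, add_zero, add_zero, ← Finset.sum_add_distrib]
  refine Finset.sum_eq_zero fun k hk => ?_
  have hkN : k < n / p := Finset.mem_range.mp hk
  have hle : p * (k + 1) ≤ n := by
    calc p * (k + 1) = (k + 1) * p := mul_comm _ _
    _ ≤ n := (Nat.le_div_iff_mul_le (by omega)).mp hkN
  have hmul : p * (k + 1) = p * k + p := by ring
  have hee : n - p * k - p = n - p * (k + 1) := by omega
  rw [hee, ← add_mul, ← Polynomial.C_add, key q s hq0 n p k hp hle, Polynomial.C_0, zero_mul]
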